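/- Let w ∈ H_0^1(Ω), ψ ∈ W^{2,∞}(Ω) with Δψ ≤ 0 a.e., and τ > 0. Define A(w,v) = ⟨w,v⟩_{L²} + τ(a(w,v) + b(w,v)). Then A(w,w) ≥ ‖w‖²_{L²(Ω)} + τ‖∇w‖²_{L²(Ω)}. -/

import Mathlib

open MeasureTheory RealInnerProductSpace

noncomputable def lap {d : ℕ} (ψ : EuclideanSpace ℝ (Fin d) → ℝ)
    (x : EuclideanSpace ℝ (Fin d)) : ℝ :=
  ∑ i : Fin d,
    fderiv ℝ (fun y => fderiv ℝ ψ y (EuclideanSpace.single i 1)) x (EuclideanSpace.single i 1)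

def MemH10 {d : ℕ} (Ω : Set (EuclideanSpace ℝ (Fin d)))
    (w : EuclideanSpace ℝ (Fin d) → ℝ) : Prop :=
  Differentiable ℝ w ∧
  MemLp w 2 (volume.restrict Ω) ∧
  MemLp (fun x => gradient w x) 2 (volume.restrict Ω) ∧
  ∀ x ∈ frontier Ω, w x = 0

def MemW2Inf {d : ℕ} (Ω : Set (EuclideanSpace ℝ (Fin d)))
    (ψ : EuclideanSpace ℝ (Fin d) → ℝ) : Prop :=
  ContDiff ℝ 2 ψ ∧
  ∃ C : ℝ, ∀ x ∈ Ω, |ψ x| ≤ C ∧ ‖gradient ψ x‖ ≤ C ∧ |lap ψ x| ≤ C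

noncomputable def aForm {d : ℕ} (Ω : Set (EuclideanSpace ℝ (Fin d)))
    (w v : EuclideanSpace ℝ (Fin d) → ℝ) : ℝ :=
  ∫ x in Ω, ⟪gradient w x, gradient v x⟫

noncomputable def bForm {d : ℕ} (Ω : Set (EuclideanSpace ℝ (Fin d)))
    (ψ w v : EuclideanSpace ℝ (Fin d) → ℝ) : ℝ :=
  ∫ x in Ω, w x * ⟪gradient ψ x, gradient v x⟫

noncomputable def AForm {d : ℕ} (Ω : Set (EuclideanSpace ℝ (Fin d)))
    (ψ : EuclideanSpace ℝ (Fin d) → ℝ) (τ : ℝ)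
    (w v : EuclideanSpace ℝ (Fin d) → ℝ) : ℝ :=
  (∫ x in Ω, w x * v x) + τ * (aForm Ω w v + bForm Ω ψ w v)


variable {d : ℕ}

noncomputable def uF (ψ : EuclideanSpace ℝ (Fin d) → ℝ) (i : Fin d) :
    EuclideanSpace ℝ (Fin d) → ℝ :=
  fun y => fderiv ℝ ψ y (EuclideanSpace.single i 1)

noncomputable def hF (Ω : Set (EuclideanSpace ℝ (Fin d))) (ψ w : EuclideanSpace ℝ (Fin d) → ℝ)
    (i : Fin d) : EuclideanSpace ℝ (Fin d) → ℝ :=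
  Set.indicator (closure Ω) (fun y => w y * (w y * uF ψ i y))

noncomputable def HF (Ω : Set (EuclideanSpace ℝ (Fin d))) (ψ w : EuclideanSpace ℝ (Fin d) → ℝ)
    (i : Fin d) : EuclideanSpace ℝ (Fin d) → (EuclideanSpace ℝ (Fin d) →L[ℝ] ℝ) :=
  Set.indicator (interior Ω) (fun x =>
    w x • (w x • fderiv ℝ (uF ψ i) x + uF ψ i x • fderiv ℝ w x)
      + (w x * uF ψ i x) • fderiv ℝ w x)

lemma inner_gradient_eq (f : EuclideanSpace ℝ (Fin d) → ℝ) (x v : EuclideanSpace ℝ (Fin d)) :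
    ⟪gradient f x, v⟫ = fderiv ℝ f x v := by
  simp [gradient, InnerProductSpace.toDual_symm_apply]

lemma norm_gradient_eq (f : EuclideanSpace ℝ (Fin d) → ℝ) (x : EuclideanSpace ℝ (Fin d)) :
    ‖gradient f x‖ = ‖fderiv ℝ f x‖ := by
  simp [gradient]

lemma norm_single_one (i : Fin d) : ‖(EuclideanSpace.single i (1:ℝ))‖ = 1 := by
  simp [EuclideanSpace.norm_single]

lemma gradient_apply_eq (f : EuclideanSpace ℝ (Fin d) → ℝ) (x : EuclideanSpace ℝ (Fin d))
    (i : Fin d) : gradient f x i = fderiv ℝ f x (EuclideanSpace.single i 1) := by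
  rw [← inner_gradient_eq, EuclideanSpace.inner_single_right]
  simp

lemma inner_eq_sum (a b : EuclideanSpace ℝ (Fin d)) : ⟪a, b⟫ = ∑ i, a i * b i := by
  simp [PiLp.inner_apply, RCLike.inner_apply, conj_trivial]
  exact Finset.sum_congr rfl fun i _ => mul_comm _ _

lemma uF_contDiff {ψ : EuclideanSpace ℝ (Fin d) → ℝ} (hψ : ContDiff ℝ 2 ψ) (i : Fin d) :
    ContDiff ℝ 1 (uF ψ i) :=
  (hψ.fderiv_right (by norm_num)).clm_apply contDiff_const

lemma integrable_mul_L2 {α : Type*} [MeasurableSpace α] {μ : Measure α} {f g : α → ℝ}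
    (hf : MemLp f 2 μ) (hg : MemLp g 2 μ) : Integrable (fun x => f x * g x) μ := by
  have h := hf.smul hg (r := 1) (hpqr := ⟨by simp [one_div, ENNReal.inv_two_add_inv_two]⟩)
  rw [← memLp_one_iff_integrable]
  exact (by simpa [Pi.smul_apply, smul_eq_mul, mul_comm] using h : MemLp (f * g) 1 μ)

lemma hF_hasFDerivAt {Ω : Set (EuclideanSpace ℝ (Fin d))} {ψ w : EuclideanSpace ℝ (Fin d) → ℝ}
    (hψ : ContDiff ℝ 2 ψ) (hwdiff : Differentiable ℝ w)
    (hwbd : ∀ x ∈ frontier Ω, w x = 0) (i : Fin d) (x : EuclideanSpace ℝ (Fin d)) :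
    HasFDerivAt (hF Ω ψ w i) (HF Ω ψ w i x) x := by
  have hui := ((uF_contDiff hψ i).differentiable one_ne_zero)
  by_cases hx : x ∈ interior Ω
  · have hev : hF Ω ψ w i =ᶠ[nhds x] fun y => w y * (w y * uF ψ i y) := by
      filter_upwards [isOpen_interior.mem_nhds hx] with y hy
      exact Set.indicator_of_mem (interior_subset_closure hy) _
    have h := (hwdiff x).hasFDerivAt.mul ((hwdiff x).hasFDerivAt.mul (hui x).hasFDerivAt)
    rw [HF, Set.indicator_of_mem hx]
    exact h.congr_of_eventuallyEq hev
  · rw [HF, Set.indicator_of_notMem hx]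
    by_cases hx' : x ∈ closure Ω
    · have hfr : x ∈ frontier Ω := ⟨hx', hx⟩
      have hwx : w x = 0 := hwbd x hfr
      have hFx : hF Ω ψ w i x = 0 := by
        simp [hF, Set.indicator_of_mem hx', hwx]
      refine HasFDerivAt.of_isLittleO ?_
      simp only [hFx, ContinuousLinearMap.zero_apply, sub_zero]
      have h1 : (fun y => w y) =O[nhds x] fun y => y - x := by
        simpa [hwx] using (hwdiff x).hasFDerivAt.isBigO_sub
      have h2 : (fun y => w y * uF ψ i y) =o[nhds x] (fun _ => (1:ℝ)) := by
        rw [Asymptotics.isLittleO_one_iff]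
        have := (hwdiff.continuous.tendsto x).mul (hui.continuous.tendsto x)
        simpa [hwx] using this
      have h3 : (fun y => w y * (w y * uF ψ i y)) =o[nhds x]
          fun y => ‖y - x‖ * 1 := h1.norm_right.mul_isLittleO h2
      have h4 : (fun y => w y * (w y * uF ψ i y)) =o[nhds x] fun y => y - x := by
        have hO : (fun y : EuclideanSpace ℝ (Fin d) => ‖y - x‖ * 1) =O[nhds x]
            fun y => y - x := by
          apply Asymptotics.isBigO_of_le
          intro y; simp
        exact h3.trans_isBigO hO
      refine Asymptotics.IsBigO.trans_isLittleO ?_ h4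
      apply Asymptotics.isBigO_of_le
      intro y
      simpa [hF] using norm_indicator_le_norm_self (fun y => w y * (w y * uF ψ i y)) y
    · have hev : hF Ω ψ w i =ᶠ[nhds x] fun _ => (0:ℝ) := by
        filter_upwards [isClosed_closure.isOpen_compl.mem_nhds hx'] with y hy
        exact Set.indicator_of_notMem hy _
      exact (hasFDerivAt_const (0:ℝ) x).congr_of_eventuallyEq hev

lemma hF_integrable {Ω : Set (EuclideanSpace ℝ (Fin d))} {ψ w : EuclideanSpace ℝ (Fin d) → ℝ}
    (hΩbdd : Bornology.IsBounded Ω) (hψ : ContDiff ℝ 2 ψ) (hwdiff : Differentiable ℝ w)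
    (i : Fin d) : Integrable (hF Ω ψ w i) volume := by
  rw [hF, integrable_indicator_iff measurableSet_closure]
  have hcont : Continuous fun y => w y * (w y * uF ψ i y) :=
    hwdiff.continuous.mul (hwdiff.continuous.mul (uF_contDiff hψ i).continuous)
  exact hcont.continuousOn.integrableOn_compact hΩbdd.isCompact_closure

lemma HF_apply_integrable {Ω : Set (EuclideanSpace ℝ (Fin d))}
    {ψ w : EuclideanSpace ℝ (Fin d) → ℝ}
    (hΩmeas : MeasurableSet Ω) (hΩbdd : Bornology.IsBounded Ω)
    (hψ : ContDiff ℝ 2 ψ) {C : ℝ} (hC : ∀ x ∈ Ω, ‖gradient ψ x‖ ≤ C)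
    (hwdiff : Differentiable ℝ w)
    (hwL2 : MemLp w 2 (volume.restrict Ω))
    (hgwL2 : MemLp (fun x => gradient w x) 2 (volume.restrict Ω)) (i : Fin d) :
    Integrable (fun x => HF Ω ψ w i x (EuclideanSpace.single i 1)) volume := by
  set e : EuclideanSpace ℝ (Fin d) := EuclideanSpace.single i 1 with he
  set φ : EuclideanSpace ℝ (Fin d) → ℝ := fun x =>
    w x * (w x * fderiv ℝ (uF ψ i) x e + uF ψ i x * fderiv ℝ w x e)
      + (w x * uF ψ i x) * fderiv ℝ w x e with hφ
  have hfun : (fun x => HF Ω ψ w i x e) = Set.indicator (interior Ω) φ := by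
    funext x
    by_cases hx : x ∈ interior Ω
    · simp only [HF, Set.indicator_of_mem hx, hφ]
      simp only [ContinuousLinearMap.add_apply, ContinuousLinearMap.smul_apply, smul_eq_mul]
    · simp [HF, Set.indicator_of_notMem hx]
  have hDu : Continuous (fun x => fderiv ℝ (uF ψ i) x) :=
    (uF_contDiff hψ i).continuous_fderiv one_ne_zero
  obtain ⟨M, hM⟩ := (hΩbdd.isCompact_closure).exists_bound_of_continuousOn
    (hDu.continuousOn (s := closure Ω))
  rw [hfun, integrable_indicator_iff measurableSet_interior]
  have hint : IntegrableOn φ Ω volume := by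
    have h1 : Integrable (fun x => |w x| * |w x|) (volume.restrict Ω) :=
      integrable_mul_L2 hwL2.abs hwL2.abs
    have h2 : Integrable (fun x => |w x| * ‖gradient w x‖) (volume.restrict Ω) :=
      integrable_mul_L2 hwL2.abs hgwL2.norm
    have hbound : Integrable (fun x => |w x| * (|w x| * M + C * ‖gradient w x‖)
        + (|w x| * C) * ‖gradient w x‖) (volume.restrict Ω) := by
      have := ((h1.const_mul M).add ((h2.const_mul C))).add (h2.const_mul C)
      apply this.congr
      filter_upwards with x
      simp only [Pi.add_apply]; ring
    apply Integrable.mono' hbound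
    · have m1 : AEStronglyMeasurable w (volume.restrict Ω) :=
        hwdiff.continuous.aestronglyMeasurable
      have m2 : AEStronglyMeasurable (uF ψ i) (volume.restrict Ω) :=
        ((uF_contDiff hψ i).continuous).aestronglyMeasurable
      have m3 : AEStronglyMeasurable (fun x => fderiv ℝ (uF ψ i) x e) (volume.restrict Ω) :=
        (hDu.clm_apply continuous_const).aestronglyMeasurable
      have m4 : AEStronglyMeasurable (fun x => fderiv ℝ w x e) (volume.restrict Ω) :=
        (measurable_fderiv_apply_const ℝ w e).aestronglyMeasurable
      exact ((m1.mul ((m1.mul m3).add (m2.mul m4)))).add ((m1.mul m2).mul m4)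
    · rw [ae_restrict_iff' hΩmeas]
      filter_upwards with x hx
      have hu : |uF ψ i x| ≤ C := by
        have h : uF ψ i x = ⟪gradient ψ x, e⟫ := (inner_gradient_eq ψ x e).symm
        rw [h, ← Real.norm_eq_abs]
        calc ‖(⟪gradient ψ x, e⟫:ℝ)‖ ≤ ‖gradient ψ x‖ * ‖e‖ := norm_inner_le_norm _ _
        _ ≤ C := by rw [norm_single_one]; simpa using hC x hx
      have hDux : |fderiv ℝ (uF ψ i) x e| ≤ M := by
        calc |fderiv ℝ (uF ψ i) x e| ≤ ‖fderiv ℝ (uF ψ i) x‖ * ‖e‖ :=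
          (fderiv ℝ (uF ψ i) x).le_opNorm e
        _ ≤ M := by rw [norm_single_one]; simpa using hM x (subset_closure hx)
      have hDwx : |fderiv ℝ w x e| ≤ ‖gradient w x‖ := by
        calc |fderiv ℝ w x e| ≤ ‖fderiv ℝ w x‖ * ‖e‖ := (fderiv ℝ w x).le_opNorm e
        _ = ‖gradient w x‖ := by rw [norm_single_one, norm_gradient_eq]; ring
      have hM0 : (0:ℝ) ≤ M := le_trans (abs_nonneg _) hDux
      have hC0 : (0:ℝ) ≤ C := le_trans (abs_nonneg _) hu
      rw [hφ, Real.norm_eq_abs]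
      have t1 : |w x * (w x * fderiv ℝ (uF ψ i) x e + uF ψ i x * fderiv ℝ w x e)|
          ≤ |w x| * (|w x| * M + C * ‖gradient w x‖) := by
        rw [abs_mul]
        apply mul_le_mul_of_nonneg_left _ (abs_nonneg _)
        calc |w x * fderiv ℝ (uF ψ i) x e + uF ψ i x * fderiv ℝ w x e|
            ≤ |w x * fderiv ℝ (uF ψ i) x e| + |uF ψ i x * fderiv ℝ w x e| := abs_add_le _ _
        _ ≤ |w x| * M + C * ‖gradient w x‖ := by
            rw [abs_mul, abs_mul]
            gcongr
      have t2 : |(w x * uF ψ i x) * fderiv ℝ w x e| ≤ (|w x| * C) * ‖gradient w x‖ := by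
        rw [abs_mul, abs_mul]
        gcongr
      calc |φ x| ≤ |w x * (w x * fderiv ℝ (uF ψ i) x e + uF ψ i x * fderiv ℝ w x e)|
          + |(w x * uF ψ i x) * fderiv ℝ w x e| := abs_add_le _ _
      _ ≤ |w x| * (|w x| * M + C * ‖gradient w x‖) + (|w x| * C) * ‖gradient w x‖ :=
          add_le_add t1 t2
  exact hint.mono_set interior_subset

lemma integral_HF_eq_zero {Ω : Set (EuclideanSpace ℝ (Fin d))}
    {ψ w : EuclideanSpace ℝ (Fin d) → ℝ}
    (hΩmeas : MeasurableSet Ω) (hΩbdd : Bornology.IsBounded Ω)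
    (hψ : ContDiff ℝ 2 ψ) {C : ℝ} (hC : ∀ x ∈ Ω, ‖gradient ψ x‖ ≤ C)
    (hwdiff : Differentiable ℝ w) (hwbd : ∀ x ∈ frontier Ω, w x = 0)
    (hwL2 : MemLp w 2 (volume.restrict Ω))
    (hgwL2 : MemLp (fun x => gradient w x) 2 (volume.restrict Ω)) (i : Fin d) :
    ∫ x, HF Ω ψ w i x (EuclideanSpace.single i 1) = 0 := by
  set e : EuclideanSpace ℝ (Fin d) := EuclideanSpace.single i 1 with he
  have key := integral_bilinear_hasFDerivAt_right_eq_neg_left_of_integrable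
    (μ := (volume : Measure (EuclideanSpace ℝ (Fin d))))
    (B := ContinuousLinearMap.mul ℝ ℝ) (v := e)
    (f := hF Ω ψ w i) (f' := HF Ω ψ w i) (g := fun _ => (1:ℝ)) (g' := fun _ => 0)
    (by simpa using HF_apply_integrable hΩmeas hΩbdd hψ hC hwdiff hwL2 hgwL2 i)
    (by simpa using (integrable_zero _ ℝ (volume : Measure (EuclideanSpace ℝ (Fin d)))))
    (by simpa using hF_integrable hΩbdd hψ hwdiff i)
    (fun x _ => hF_hasFDerivAt hψ hwdiff hwbd i x)
    (fun x _ => hasFDerivAt_const 1 x)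
  simpa using key.symm

lemma sum_HF_eq {Ω : Set (EuclideanSpace ℝ (Fin d))} {ψ w : EuclideanSpace ℝ (Fin d) → ℝ}
    (hwbd : ∀ x ∈ frontier Ω, w x = 0) (x : EuclideanSpace ℝ (Fin d)) :
    ∑ i, HF Ω ψ w i x (EuclideanSpace.single i 1) =
      Set.indicator Ω
        (fun x => 2 * (w x * ⟪gradient ψ x, gradient w x⟫) + w x * w x * lap ψ x) x := by
  by_cases hx : x ∈ interior Ω
  · rw [Set.indicator_of_mem (interior_subset hx)]
    have hlap : lap ψ x = ∑ i, fderiv ℝ (uF ψ i) x (EuclideanSpace.single i 1) := rfl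
    have hinner : ⟪gradient ψ x, gradient w x⟫
        = ∑ i, uF ψ i x * fderiv ℝ w x (EuclideanSpace.single i 1) := by
      rw [inner_eq_sum]
      refine Finset.sum_congr rfl fun i _ => ?_
      rw [gradient_apply_eq, gradient_apply_eq]
      rfl
    rw [hlap, hinner]
    simp only [Finset.mul_sum]
    rw [← Finset.sum_add_distrib]
    refine Finset.sum_congr rfl fun i _ => ?_
    simp only [HF, Set.indicator_of_mem hx, ContinuousLinearMap.add_apply,
      ContinuousLinearMap.smul_apply, smul_eq_mul]
    ring
  · by_cases hxΩ : x ∈ Ω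
    · have hwx : w x = 0 := hwbd x ⟨subset_closure hxΩ, hx⟩
      rw [Set.indicator_of_mem hxΩ]
      simp [HF, Set.indicator_of_notMem hx, hwx]
    · rw [Set.indicator_of_notMem hxΩ]
      simp [HF, Set.indicator_of_notMem hx]

lemma bForm_aux_nonneg {Ω : Set (EuclideanSpace ℝ (Fin d))}
    {ψ w : EuclideanSpace ℝ (Fin d) → ℝ}
    (hΩmeas : MeasurableSet Ω) (hΩbdd : Bornology.IsBounded Ω)
    (hψ : ContDiff ℝ 2 ψ) {C : ℝ}
    (hC : ∀ x ∈ Ω, ‖gradient ψ x‖ ≤ C ∧ |lap ψ x| ≤ C)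
    (hwdiff : Differentiable ℝ w) (hwbd : ∀ x ∈ frontier Ω, w x = 0)
    (hwL2 : MemLp w 2 (volume.restrict Ω))
    (hgwL2 : MemLp (fun x => gradient w x) 2 (volume.restrict Ω))
    (hΔψ : ∀ᵐ x ∂(volume.restrict Ω), lap ψ x ≤ 0) :
    0 ≤ ∫ x in Ω, w x * ⟪gradient ψ x, gradient w x⟫ := by
  have hC1 : ∀ x ∈ Ω, ‖gradient ψ x‖ ≤ C := fun x hx => (hC x hx).1
  -- lap ψ is continuous
  have hDu : ∀ i : Fin d, Continuous (fun x => fderiv ℝ (uF ψ i) x) :=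
    fun i => (uF_contDiff hψ i).continuous_fderiv one_ne_zero
  have hlapc : Continuous (lap ψ) := by
    have : Continuous fun x => ∑ i, fderiv ℝ (uF ψ i) x (EuclideanSpace.single i 1) :=
      continuous_finset_sum _ fun i _ => (hDu i).clm_apply continuous_const
    exact this
  -- gradient ψ continuous, gradient w measurable
  have hgψc : Continuous (fun x => gradient ψ x) := by
    have : Continuous (fderiv ℝ ψ) := hψ.continuous_fderiv (by norm_num)
    exact ((InnerProductSpace.toDual ℝ _).symm.continuous).comp this
  have hgwm : AEStronglyMeasurable (fun x => gradient w x) (volume.restrict Ω) :=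
    ((((InnerProductSpace.toDual ℝ _).symm.continuous.measurable)).comp
      (measurable_fderiv ℝ w)).aestronglyMeasurable
  -- integrability of the two pieces
  have I1 : Integrable (fun x => w x * ⟪gradient ψ x, gradient w x⟫) (volume.restrict Ω) := by
    have hbound : Integrable (fun x => C * (|w x| * ‖gradient w x‖)) (volume.restrict Ω) :=
      (integrable_mul_L2 hwL2.abs hgwL2.norm).const_mul C
    apply Integrable.mono' hbound
    · exact (hwdiff.continuous.aestronglyMeasurable).mul
        ((hgψc.aestronglyMeasurable).inner hgwm)
    · rw [ae_restrict_iff' hΩmeas]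
      filter_upwards with x hx
      rw [Real.norm_eq_abs, abs_mul]
      calc |w x| * |⟪gradient ψ x, gradient w x⟫|
          ≤ |w x| * (‖gradient ψ x‖ * ‖gradient w x‖) := by
            gcongr
            exact norm_inner_le_norm (𝕜 := ℝ) _ _
      _ ≤ |w x| * (C * ‖gradient w x‖) :=
            mul_le_mul_of_nonneg_left
              (mul_le_mul_of_nonneg_right (hC1 x hx) (norm_nonneg _)) (abs_nonneg _)
      _ = C * (|w x| * ‖gradient w x‖) := by ring
  have I2 : Integrable (fun x => w x * w x * lap ψ x) (volume.restrict Ω) := by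
    have hbound : Integrable (fun x => (|w x| * |w x|) * C) (volume.restrict Ω) :=
      (integrable_mul_L2 hwL2.abs hwL2.abs).mul_const C
    apply Integrable.mono' hbound
    · exact ((hwdiff.continuous.mul hwdiff.continuous).mul hlapc).aestronglyMeasurable
    · rw [ae_restrict_iff' hΩmeas]
      filter_upwards with x hx
      rw [Real.norm_eq_abs, abs_mul, abs_mul]
      gcongr
      exact (hC x hx).2
  -- the divergence identity
  have hzero : (∫ x in Ω, (2 * (w x * ⟪gradient ψ x, gradient w x⟫)
      + w x * w x * lap ψ x)) = 0 := by
    have hint : ∀ i : Fin d,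
        Integrable (fun x => HF Ω ψ w i x (EuclideanSpace.single i 1)) volume :=
      fun i => HF_apply_integrable hΩmeas hΩbdd hψ hC1 hwdiff hwL2 hgwL2 i
    have hsum : (∫ x, ∑ i, HF Ω ψ w i x (EuclideanSpace.single i 1)) = 0 := by
      rw [integral_finset_sum _ (fun i _ => hint i)]
      refine Finset.sum_eq_zero fun i _ => ?_
      exact integral_HF_eq_zero hΩmeas hΩbdd hψ hC1 hwdiff hwbd hwL2 hgwL2 i
    calc (∫ x in Ω, (2 * (w x * ⟪gradient ψ x, gradient w x⟫) + w x * w x * lap ψ x))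
        = ∫ x, Set.indicator Ω
            (fun x => 2 * (w x * ⟪gradient ψ x, gradient w x⟫) + w x * w x * lap ψ x) x := by
          rw [integral_indicator hΩmeas]
      _ = ∫ x, ∑ i, HF Ω ψ w i x (EuclideanSpace.single i 1) := by
          congr 1
          funext x
          exact (sum_HF_eq hwbd x).symm
      _ = 0 := hsum
  have hsplit : 2 * (∫ x in Ω, w x * ⟪gradient ψ x, gradient w x⟫)
      + (∫ x in Ω, w x * w x * lap ψ x) = 0 := by
    rw [← integral_const_mul, ← integral_add (I1.const_mul 2) I2]
    exact hzero
  have hnonpos : (∫ x in Ω, w x * w x * lap ψ x) ≤ 0 := by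
    apply integral_nonpos_of_ae
    filter_upwards [hΔψ] with x hx
    have : 0 ≤ w x * w x := mul_self_nonneg _
    exact mul_nonpos_of_nonneg_of_nonpos this hx
  linarith

/-- Semi-discrete coercivity under Δψ ≤ 0:
A(w,w) ≥ ‖w‖²_{L²} + τ‖∇w‖²_{L²}. -/
theorem semi_discrete_coercivity {d : ℕ} (Ω : Set (EuclideanSpace ℝ (Fin d)))
    (hΩmeas : MeasurableSet Ω) (hΩbdd : Bornology.IsBounded Ω)
    (w ψ : EuclideanSpace ℝ (Fin d) → ℝ)
    (hw : MemH10 Ω w) (hψ : MemW2Inf Ω ψ)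
    (hΔψ : ∀ᵐ x ∂(volume.restrict Ω), lap ψ x ≤ 0)
    (τ : ℝ) (hτ : 0 < τ) :
    (∫ x in Ω, (w x)^2) + τ * ∫ x in Ω, ‖gradient w x‖^2 ≤ AForm Ω ψ τ w w := by
  obtain ⟨hwdiff, hwL2, hgwL2, hwbd⟩ := hw
  obtain ⟨hψC2, C, hC⟩ := hψ
  have hb : 0 ≤ bForm Ω ψ w w := by
    have := bForm_aux_nonneg hΩmeas hΩbdd hψC2 (C := C)
      (fun x hx => ⟨(hC x hx).2.1, (hC x hx).2.2⟩) hwdiff hwbd hwL2 hgwL2 hΔψ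
    simpa [bForm] using this
  have ha : aForm Ω w w = ∫ x in Ω, ‖gradient w x‖^2 := by
    unfold aForm
    congr 1
    funext x
    exact real_inner_self_eq_norm_sq _
  have hm : (∫ x in Ω, w x * w x) = ∫ x in Ω, (w x)^2 := by
    congr 1
    funext x
    rw [pow_two]
  unfold AForm
  rw [ha, hm]
  nlinarith [mul_nonneg hτ.le hb]
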